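/- For B in the subgroup S_{p,q} generated by L_p and L_q, the off-block coefficients in columns p and q are determined by the 2×2 block B♯: B_{r,p} = -1 + B_{p,p} - B_{q,p} for r < p, B_{r,p} = -1 + B_{p,p} + B_{q,p} for p < r < q, B_{r,p} = 1 - B_{p,p} + B_{q,p} for r > q; and B_{r,q} = 1 + B_{p,q} - B_{q,q} for r < p, B_{r,q} = -1 + B_{p,q} + B_{q,q} for p < r < q, B_{r,q} = -1 - B_{p,q} + B_{q,q} for r > q. -/

import Mathlib

set_option maxHeartbeats 1000000


open Matrix

/-- The matrix of the operator `L_p`. -/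
def L (d : ℕ) (p : Fin d) : Matrix (Fin d) (Fin d) ℤ :=
  Matrix.of fun r q => if q = p then (if r < p then -1 else 1) else (if r = q then 1 else 0)

/-- The subgroup `S_{p,q}` generated by `L_p` and `L_q`. -/
def Spq (d : ℕ) (p q : Fin d) : Subgroup (Matrix (Fin d) (Fin d) ℤ)ˣ :=
  Subgroup.closure {u : (Matrix (Fin d) (Fin d) ℤ)ˣ |
    (u : Matrix (Fin d) (Fin d) ℤ) = L d p ∨ (u : Matrix (Fin d) (Fin d) ℤ) = L d q}

/-- Row vectors fixed (as row vectors) by both generators are fixed by every element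
of `S_{p,q}`. -/
lemma Spq.fixed_row (d : ℕ) (p q : Fin d) (u : (Matrix (Fin d) (Fin d) ℤ)ˣ)
    (hu : u ∈ Spq d p q) (w : Fin d → ℤ) (h1 : w ᵥ* L d p = w) (h2 : w ᵥ* L d q = w) :
    w ᵥ* (u : Matrix (Fin d) (Fin d) ℤ) = w := by
  induction hu using Subgroup.closure_induction with
  | mem x hx => rcases hx with h | h <;> rw [h] <;> assumption
  | one => simp
  | mul x y _ _ hx hy => rw [Units.val_mul, ← vecMul_vecMul, hx, hy]
  | inv x _ hx =>
      have h := congrArg (fun v => v ᵥ* ((x⁻¹ : (Matrix (Fin d) (Fin d) ℤ)ˣ) :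
        Matrix (Fin d) (Fin d) ℤ)) hx
      simpa [vecMul_vecMul, ← Units.val_mul] using h.symm

/-- For `B ∈ S_{p,q}` the coefficients of `B` in columns `p` and `q` outside rows `p,q`
are determined by the `2×2` block `B♯`. -/
theorem Spq_column_formulas (d : ℕ) (hd : 2 ≤ d) (p q : Fin d) (hpq : p < q)
    (u : (Matrix (Fin d) (Fin d) ℤ)ˣ) (hu : u ∈ Spq d p q) (r : Fin d) :
    letI B : Matrix (Fin d) (Fin d) ℤ := (u : Matrix (Fin d) (Fin d) ℤ)
    (r < p → B r p = -1 + B p p - B q p) ∧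
    (p < r → r < q → B r p = -1 + B p p + B q p) ∧
    (q < r → B r p = 1 - B p p + B q p) ∧
    (r < p → B r q = 1 + B p q - B q q) ∧
    (p < r → r < q → B r q = -1 + B p q + B q q) ∧
    (q < r → B r q = -1 - B p q + B q q) := by
  set B : Matrix (Fin d) (Fin d) ℤ := (u : Matrix (Fin d) (Fin d) ℤ) with hB
  have main : ∀ (a b : ℤ),
      ((Pi.single r 1 + Pi.single p a + Pi.single q b : Fin d → ℤ) ᵥ* L d p
        = (Pi.single r 1 + Pi.single p a + Pi.single q b : Fin d → ℤ)) →
      ((Pi.single r 1 + Pi.single p a + Pi.single q b : Fin d → ℤ) ᵥ* L d q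
        = (Pi.single r 1 + Pi.single p a + Pi.single q b : Fin d → ℤ)) →
      ∀ s : Fin d, B r s + a * B p s + b * B q s
        = (Pi.single r 1 + Pi.single p a + Pi.single q b : Fin d → ℤ) s := by
    intro a b h1 h2 s
    have hw := Spq.fixed_row d p q u hu _ h1 h2
    have := congrFun hw s
    simpa [add_vecMul, single_vecMul] using this
  refine ⟨?_, ?_, ?_, ?_, ?_, ?_⟩
  · intro hrp
    have h := main (-1) 1 ?_ ?_ p
    · simp [Pi.single_apply, hrp.ne, hpq.ne'] at h
      linarith
    all_goals
      funext s
      simp only [add_vecMul, single_vecMul, Pi.smul_apply, smul_eq_mul, Matrix.row_apply, one_mul, Pi.add_apply, L,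
        Matrix.of_apply, Pi.single_apply, mul_ite, mul_one, mul_zero, mul_neg]
      split_ifs <;> first | rfl | fin_omega
  · intro hpr hrq
    have h := main (-1) (-1) ?_ ?_ p
    · simp [Pi.single_apply, hpr.ne', hpq.ne'] at h
      linarith
    all_goals
      funext s
      simp only [add_vecMul, single_vecMul, Pi.smul_apply, smul_eq_mul, Matrix.row_apply, one_mul, Pi.add_apply, L,
        Matrix.of_apply, Pi.single_apply, mul_ite, mul_one, mul_zero, mul_neg]
      split_ifs <;> first | rfl | fin_omega
  · intro hqr
    have h := main 1 (-1) ?_ ?_ p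
    · have hpr : p < r := hpq.trans hqr
      simp [Pi.single_apply, hpr.ne', hpq.ne'] at h
      linarith
    all_goals
      funext s
      simp only [add_vecMul, single_vecMul, Pi.smul_apply, smul_eq_mul, Matrix.row_apply, one_mul, Pi.add_apply, L,
        Matrix.of_apply, Pi.single_apply, mul_ite, mul_one, mul_zero, mul_neg]
      split_ifs <;> first | rfl | fin_omega
  · intro hrp
    have h := main (-1) 1 ?_ ?_ q
    · have hrq : r < q := hrp.trans hpq
      simp [Pi.single_apply, hrq.ne, hpq.ne] at h
      linarith
    all_goals
      funext s
      simp only [add_vecMul, single_vecMul, Pi.smul_apply, smul_eq_mul, Matrix.row_apply, one_mul, Pi.add_apply, L,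
        Matrix.of_apply, Pi.single_apply, mul_ite, mul_one, mul_zero, mul_neg]
      split_ifs <;> first | rfl | fin_omega
  · intro hpr hrq
    have h := main (-1) (-1) ?_ ?_ q
    · simp [Pi.single_apply, hrq.ne, hpq.ne] at h
      linarith
    all_goals
      funext s
      simp only [add_vecMul, single_vecMul, Pi.smul_apply, smul_eq_mul, Matrix.row_apply, one_mul, Pi.add_apply, L,
        Matrix.of_apply, Pi.single_apply, mul_ite, mul_one, mul_zero, mul_neg]
      split_ifs <;> first | rfl | fin_omega
  · intro hqr
    have h := main 1 (-1) ?_ ?_ q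
    · simp [Pi.single_apply, hqr.ne', hpq.ne] at h
      linarith
    all_goals
      funext s
      simp only [add_vecMul, single_vecMul, Pi.smul_apply, smul_eq_mul, Matrix.row_apply, one_mul, Pi.add_apply, L,
        Matrix.of_apply, Pi.single_apply, mul_ite, mul_one, mul_zero, mul_neg]
      split_ifs <;> first | rfl | fin_omega
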